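/- Let f : ℝⁿ \ {0} → ℝ be locally Lipschitz continuous. Then the map I : (0,∞) → ℝ given by I(s) = ∫_{∂B_s(0)} f(y) dH^{n−1}(y) is locally Lipschitz continuous on (0,∞). -/

import Mathlib

open MeasureTheory Metric Set Pointwise
open scoped ENNReal NNReal

lemma radial_lip {F : Type*} [NormedAddCommGroup F] [NormedSpace ℝ F] :
    LipschitzOnWith 2 (fun y : F => ‖y‖⁻¹ • y) {y : F | 1 ≤ ‖y‖} := by
  apply LipschitzOnWith.of_dist_le_mul
  intro x hx y hy
  simp only [mem_setOf_eq] at hx hy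
  have hx0 : (0:ℝ) < ‖x‖ := lt_of_lt_of_le one_pos hx
  have hy0 : (0:ℝ) < ‖y‖ := lt_of_lt_of_le one_pos hy
  rw [dist_eq_norm]
  have key : ‖x‖⁻¹ • x - ‖y‖⁻¹ • y = ‖x‖⁻¹ • (x - y) + (‖x‖⁻¹ - ‖y‖⁻¹) • y := by
    module
  rw [key]
  have h1 : ‖‖x‖⁻¹ • (x - y)‖ ≤ ‖x - y‖ := by
    rw [norm_smul, norm_inv, norm_norm]
    calc ‖x‖⁻¹ * ‖x - y‖ ≤ 1 * ‖x - y‖ := by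
          apply mul_le_mul_of_nonneg_right _ (norm_nonneg _)
          rw [inv_le_one_iff₀]; right; exact hx
      _ = ‖x - y‖ := one_mul _
  have h2 : ‖(‖x‖⁻¹ - ‖y‖⁻¹) • y‖ ≤ ‖x - y‖ := by
    rw [norm_smul, Real.norm_eq_abs]
    have : ‖x‖⁻¹ - ‖y‖⁻¹ = (‖y‖ - ‖x‖) / (‖x‖ * ‖y‖) := by
      field_simp
    rw [this, abs_div, abs_mul, abs_of_pos hx0, abs_of_pos hy0]
    rw [div_mul_eq_mul_div, mul_comm, mul_div_assoc]
    calc ‖y‖ * (|‖y‖ - ‖x‖| / (‖x‖ * ‖y‖)) = |‖y‖ - ‖x‖| / ‖x‖ := by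
          field_simp
      _ ≤ ‖x - y‖ / 1 := by
          apply div_le_div₀ _ _ one_pos hx
          · exact norm_nonneg _
          · rw [abs_sub_comm]
            exact (abs_norm_sub_norm_le x y).trans (le_of_eq rfl)
      _ = ‖x - y‖ := div_one _
  calc ‖‖x‖⁻¹ • (x - y) + (‖x‖⁻¹ - ‖y‖⁻¹) • y‖
      ≤ ‖‖x‖⁻¹ • (x - y)‖ + ‖(‖x‖⁻¹ - ‖y‖⁻¹) • y‖ := norm_add_le _ _
    _ ≤ ‖x - y‖ + ‖x - y‖ := add_le_add h1 h2
    _ = 2 * dist x y := by rw [dist_eq_norm]; ring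

lemma insertNth_lip {m : ℕ} (j : Fin (m+1)) (σ : ℝ) :
    LipschitzWith 1 (fun p : Fin m → ℝ => (j.insertNth σ p : Fin (m+1) → ℝ)) := by
  apply LipschitzWith.of_dist_le_mul
  intro p q
  rw [NNReal.coe_one, one_mul]
  rw [dist_pi_le_iff dist_nonneg]
  intro i
  rcases eq_or_ne i j with rfl | hij
  · simpa [Fin.insertNth_apply_same] using dist_nonneg
  · obtain ⟨k, rfl⟩ := Fin.exists_succAbove_eq hij
    simp only [Fin.insertNth_apply_succAbove]
    exact dist_le_pi_dist p q k

lemma coord_le_norm {m : ℕ} (x : EuclideanSpace ℝ (Fin m)) (j : Fin m) : |x j| ≤ ‖x‖ := by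
  have h := (PiLp.lipschitzWith_ofLp 2 (fun _ : Fin m => ℝ)).norm_le_mul (by simp) x
  calc |x j| ≤ ‖WithLp.equiv 2 (Fin m → ℝ) x‖ := norm_le_pi_norm (WithLp.equiv 2 (Fin m → ℝ) x) j
    _ ≤ 1 * ‖x‖ := h
    _ = ‖x‖ := one_mul _

lemma sphere_hausdorff_lt_top (m : ℕ) :
    μH[(m:ℝ)] (Metric.sphere (0 : EuclideanSpace ℝ (Fin (m+1))) 1) < ⊤ := by
  set E := EuclideanSpace ℝ (Fin (m+1))
  set π : (Fin (m+1) → ℝ) → E := fun x => (WithLp.equiv 2 (Fin (m+1) → ℝ)).symm x with hπ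
  set C := ((Fintype.card (Fin (m+1)) : ℝ≥0) ^ ((1:ℝ≥0∞)/2).toReal) with hC
  have hπlip : LipschitzWith C π :=
    (PiLp.antilipschitzWith_ofLp 2 (fun _ : Fin (m+1) => ℝ)).to_rightInverse
      (fun x => rfl)
  set ρ : E → E := fun y => ‖y‖⁻¹ • y with hρ
  set B : Set (Fin m → ℝ) := Metric.closedBall 0 1 with hB
  set ψ : Fin (m+1) → ℝ → (Fin m → ℝ) → E :=
    fun j σ p => ρ (π (j.insertNth σ p)) with hψ
  have hψlip : ∀ (j : Fin (m+1)) (σ : ℝ), |σ| = 1 →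
      LipschitzOnWith (2 * (C * 1)) (ψ j σ) B := by
    intro j σ hσ
    have hcomp : LipschitzWith (C * 1) (fun p : Fin m → ℝ => π (j.insertNth σ p)) :=
      hπlip.comp (insertNth_lip j σ)
    refine radial_lip.comp hcomp.lipschitzOnWith ?_
    intro p _
    simp only [mem_setOf_eq]
    have hsame : (π (j.insertNth σ p)) j = σ := @Fin.insertNth_apply_same m (fun _ => ℝ) j σ p
    calc (1:ℝ) = |σ| := hσ.symm
      _ = |(π (j.insertNth σ p)) j| := by rw [hsame]
      _ ≤ ‖π (j.insertNth σ p)‖ := coord_le_norm _ j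
  have himg : ∀ (j : Fin (m+1)) (σ : ℝ), |σ| = 1 → μH[(m:ℝ)] (ψ j σ '' B) < ⊤ := by
    intro j σ hσ
    have h1 := (hψlip j σ hσ).hausdorffMeasure_image_le (Nat.cast_nonneg m)
    have h2 : μH[(m:ℝ)] B < ⊤ := by
      have hvol : (μH[(m:ℝ)] : Measure (Fin m → ℝ)) = volume := by
        have := hausdorffMeasure_pi_real (ι := Fin m)
        simpa [Fintype.card_fin] using this
      rw [hvol]
      exact measure_closedBall_lt_top
    refine lt_of_le_of_lt h1 (ENNReal.mul_lt_top ?_ h2)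
    exact ENNReal.rpow_lt_top_of_nonneg (Nat.cast_nonneg m) ENNReal.coe_ne_top
  have hcover : Metric.sphere (0 : E) 1 ⊆
      ⋃ j : Fin (m+1), (ψ j 1 '' B ∪ ψ j (-1) '' B) := by
    intro x hx
    have hxn : ‖x‖ = 1 := by simpa using hx
    set x' : Fin (m+1) → ℝ := WithLp.equiv 2 (Fin (m+1) → ℝ) x with hx'
    obtain ⟨j, -, hj⟩ := Finset.exists_mem_eq_sup (Finset.univ : Finset (Fin (m+1)))
      Finset.univ_nonempty (fun i => ‖x' i‖₊)
    have hnorm : ‖x'‖ = |x' j| := by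
      rw [Pi.norm_def, hj]; simp
    set a : ℝ := x' j with ha
    have hx'0 : x' ≠ 0 := by
      intro h
      apply one_ne_zero (α := ℝ)
      rw [← hxn]
      have : x = 0 := by
        apply (WithLp.equiv 2 (Fin (m+1) → ℝ)).injective
        exact h
      simp [this]
    have ha0 : |a| ≠ 0 := by
      rw [← hnorm]; simpa using hx'0
    have hapos : 0 < |a| := lt_of_le_of_ne (abs_nonneg a) (Ne.symm ha0)
    set σ : ℝ := a / |a| with hσdef
    have hσ : |σ| = 1 := by
      rw [hσdef, abs_div, abs_abs, div_self ha0]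
    set p : Fin m → ℝ := fun k => x' (j.succAbove k) / |a| with hp
    have hpB : p ∈ B := by
      rw [hB, mem_closedBall_zero_iff]
      rw [pi_norm_le_iff_of_nonneg zero_le_one]
      intro k
      rw [Real.norm_eq_abs, hp]
      rw [abs_div, abs_abs, div_le_one hapos]
      calc |x' (j.succAbove k)| ≤ ‖x'‖ := norm_le_pi_norm x' _
        _ = |a| := hnorm
    refine mem_iUnion.2 ⟨j, ?_⟩
    have hins : (j.insertNth σ p : Fin (m+1) → ℝ) = fun i => x' i / |a| := by
      funext i
      rcases eq_or_ne i j with rfl | hij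
      · rw [@Fin.insertNth_apply_same m (fun _ => ℝ) i σ p]
      · obtain ⟨k, rfl⟩ := Fin.exists_succAbove_eq hij
        rw [@Fin.insertNth_apply_succAbove m (fun _ => ℝ) j σ p k]
    have hπz : π (j.insertNth σ p) = |a|⁻¹ • x := by
      apply (WithLp.equiv 2 (Fin (m+1) → ℝ)).injective
      funext i
      have h1 : (WithLp.equiv 2 (Fin (m+1) → ℝ)) (π (j.insertNth σ p)) i
          = (j.insertNth σ p : Fin (m+1) → ℝ) i := rfl
      have h2 : (WithLp.equiv 2 (Fin (m+1) → ℝ)) (|a|⁻¹ • x) i = |a|⁻¹ * x' i := rfl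
      rw [h1, h2, hins]
      simp [div_eq_inv_mul]
    have hψx : ψ j σ p = x := by
      show ρ (π (j.insertNth σ p)) = x
      rw [hπz]
      show ‖(|a|⁻¹ • x : E)‖⁻¹ • (|a|⁻¹ • x) = x
      rw [norm_smul, norm_inv, Real.norm_eq_abs, abs_abs, hxn, mul_one]
      rw [inv_inv, smul_smul, mul_inv_cancel₀ ha0, one_smul]
    rcases le_or_gt 0 a with hA | hA
    · left
      refine ⟨p, hpB, ?_⟩
      have : σ = 1 := by
        rw [hσdef, abs_of_nonneg hA, div_self (by rwa [abs_of_nonneg hA] at ha0)]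
      rw [← this]; exact hψx
    · right
      refine ⟨p, hpB, ?_⟩
      have : σ = -1 := by
        rw [hσdef, abs_of_neg hA, div_neg, div_self hA.ne]
      rw [← this]; exact hψx
  calc μH[(m:ℝ)] (Metric.sphere (0 : E) 1)
      ≤ μH[(m:ℝ)] (⋃ j : Fin (m+1), (ψ j 1 '' B ∪ ψ j (-1) '' B)) := measure_mono hcover
    _ ≤ ∑ j : Fin (m+1), μH[(m:ℝ)] (ψ j 1 '' B ∪ ψ j (-1) '' B) := measure_iUnion_fintype_le _ _
    _ < ⊤ := by
        rw [ENNReal.sum_lt_top]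
        intro j _
        calc μH[(m:ℝ)] (ψ j 1 '' B ∪ ψ j (-1) '' B)
            ≤ μH[(m:ℝ)] (ψ j 1 '' B) + μH[(m:ℝ)] (ψ j (-1) '' B) := measure_union_le _ _
          _ < ⊤ := ENNReal.add_lt_top.2 ⟨himg j 1 (by norm_num), himg j (-1) (by norm_num)⟩

lemma restrict_sphere_scaling {E : Type*} [NormedAddCommGroup E] [NormedSpace ℝ E]
    [MeasurableSpace E] [BorelSpace E] (d : ℝ) (hd : 0 ≤ d) {s : ℝ} (hs : 0 < s) :
    (μH[d] : Measure E).restrict (Metric.sphere 0 s)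
      = (‖s‖₊ ^ d : ℝ≥0) •
        Measure.map (fun y : E => s • y) (μH[d].restrict (Metric.sphere 0 1)) := by
  have hT : MeasurableEmbedding (fun y : E => s • y) :=
    (Homeomorph.smulOfNeZero s hs.ne').measurableEmbedding
  ext A hA
  rw [Measure.restrict_apply hA, Measure.smul_apply,
    Measure.map_apply hT.measurable hA,
    Measure.restrict_apply (hT.measurable hA)]
  have hset : A ∩ Metric.sphere 0 s
      = s • ((fun y : E => s • y) ⁻¹' A ∩ Metric.sphere 0 1) := by
    ext x
    rw [Set.mem_smul_set_iff_inv_smul_mem₀ hs.ne']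
    simp only [Set.mem_inter_iff, Set.mem_preimage, mem_sphere_iff_norm, sub_zero,
      smul_inv_smul₀ hs.ne', norm_smul, norm_inv, Real.norm_eq_abs, abs_of_pos hs]
    constructor
    · rintro ⟨h1, h2⟩
      exact ⟨h1, by rw [h2, inv_mul_cancel₀ hs.ne']⟩
    · rintro ⟨h1, h2⟩
      refine ⟨h1, ?_⟩
      have := h2
      field_simp at this
      linarith [this]
  rw [hset, Measure.hausdorffMeasure_smul₀ hd hs.ne']

lemma lipschitzOnWith_of_locally {X : Type*} [MetricSpace X] {f : X → ℝ} {s : Set X}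
    (hs : IsCompact s)
    (h : ∀ x ∈ s, ∃ ε > (0:ℝ), ∃ K : ℝ≥0, LipschitzOnWith K f (Metric.ball x ε)) :
    ∃ K : ℝ≥0, LipschitzOnWith K f s := by
  rcases s.eq_empty_or_nonempty with rfl | ⟨x₀, hx₀⟩
  · exact ⟨1, by simp⟩
  choose! ε hε K hK using h
  have hcont : ContinuousOn f s := fun x hx =>
    ((hK x hx).continuousOn.continuousAt (Metric.ball_mem_nhds x (hε x hx))).continuousWithinAt
  obtain ⟨M, hM⟩ := hs.exists_bound_of_continuousOn hcont
  have hM0 : 0 ≤ M := le_trans (norm_nonneg _) (hM x₀ hx₀)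
  obtain ⟨t, hts, hcov⟩ := hs.elim_nhds_subcover (fun x => Metric.ball x (ε x))
    (fun x hx => Metric.ball_mem_nhds x (hε x hx))
  obtain ⟨δ, hδ0, hδ⟩ := lebesgue_number_lemma_of_metric hs
    (c := fun i : {y // y ∈ t} => Metric.ball i.1 (ε i.1)) (fun i => Metric.isOpen_ball)
    (by
      intro x hx
      obtain ⟨y, hyt, hy⟩ := Set.mem_iUnion₂.1 (hcov hx)
      exact Set.mem_iUnion.2 ⟨⟨y, hyt⟩, hy⟩)
  refine ⟨t.sup K + Real.toNNReal (2 * M / δ), LipschitzOnWith.of_dist_le_mul ?_⟩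
  intro x hx y hy
  rcases lt_or_ge (dist x y) δ with hxy | hxy
  · obtain ⟨i, hi⟩ := hδ x hx
    have hxi : x ∈ Metric.ball i.1 (ε i.1) := hi (Metric.mem_ball_self hδ0)
    have hyi : y ∈ Metric.ball i.1 (ε i.1) := hi (by rwa [Metric.mem_ball, dist_comm])
    calc dist (f x) (f y) ≤ K i.1 * dist x y :=
          (hK i.1 (hts i.1 i.2)).dist_le_mul x hxi y hyi
      _ ≤ (t.sup K + Real.toNNReal (2 * M / δ)) * dist x y := by
          apply mul_le_mul_of_nonneg_right _ dist_nonneg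
          have h1 : K i.1 ≤ t.sup K := Finset.le_sup i.2
          have h1' : (K i.1 : ℝ) ≤ ((t.sup K : ℝ≥0) : ℝ) := NNReal.coe_le_coe.2 h1
          push_cast
          linarith [NNReal.coe_nonneg (Real.toNNReal (2 * M / δ))]
  · have h2M : dist (f x) (f y) ≤ 2 * M := by
      calc dist (f x) (f y) ≤ ‖f x‖ + ‖f y‖ := dist_le_norm_add_norm _ _
        _ ≤ 2 * M := by linarith [hM x hx, hM y hy]
    calc dist (f x) (f y) ≤ 2 * M := h2M
      _ = (2 * M / δ) * δ := by field_simp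
      _ ≤ (2 * M / δ) * dist x y := by
          apply mul_le_mul_of_nonneg_left hxy (by positivity)
      _ ≤ (t.sup K + Real.toNNReal (2 * M / δ)) * dist x y := by
          apply mul_le_mul_of_nonneg_right _ dist_nonneg
          push_cast
          linarith [Real.le_coe_toNNReal (2 * M / δ), NNReal.coe_nonneg (t.sup K)]

lemma pow_lip_aux {D : ℝ} (hD : 0 ≤ D) (p : ℕ) :
    ∀ s t : ℝ, s ∈ Set.Icc 0 D → t ∈ Set.Icc 0 D →
      |s ^ p - t ^ p| ≤ p * D ^ (p - 1) * |s - t| := by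
  induction p with
  | zero => intro s t _ _; simp
  | succ p ih =>
    intro s t hs ht
    have hsd := hs.2; have hs0 := hs.1; have htd := ht.2; have ht0 := ht.1
    have key : s ^ (p+1) - t ^ (p+1) = s ^ p * (s - t) + t * (s ^ p - t ^ p) := by ring
    have h1 : |s ^ p * (s - t)| ≤ D ^ p * |s - t| := by
      rw [abs_mul]
      apply mul_le_mul_of_nonneg_right _ (abs_nonneg _)
      rw [abs_of_nonneg (pow_nonneg hs0 p)]
      exact pow_le_pow_left₀ hs0 hsd p
    have h2 : |t * (s ^ p - t ^ p)| ≤ D * (p * D ^ (p-1) * |s - t|) := by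
      rw [abs_mul]
      apply mul_le_mul
      · rwa [abs_of_nonneg ht0]
      · exact ih s t hs ht
      · exact abs_nonneg _
      · exact hD
    have h3 : D * ((p:ℝ) * D ^ (p-1) * |s - t|) ≤ p * D ^ p * |s - t| := by
      rcases Nat.eq_zero_or_pos p with rfl | hp
      · simp
      · have : D ^ (p - 1) * D = D ^ p := by
          rw [← pow_succ]; congr 1; omega
        calc D * ((p:ℝ) * D ^ (p-1) * |s - t|) = (p:ℝ) * (D ^ (p-1) * D) * |s - t| := by ring
          _ = (p:ℝ) * D ^ p * |s - t| := by rw [this]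
          _ ≤ (p:ℝ) * D ^ p * |s - t| := le_refl _
    calc |s ^ (p+1) - t ^ (p+1)| = |s ^ p * (s - t) + t * (s ^ p - t ^ p)| := by rw [key]
      _ ≤ |s ^ p * (s - t)| + |t * (s ^ p - t ^ p)| := abs_add_le _ _
      _ ≤ D ^ p * |s - t| + D * ((p:ℝ) * D ^ (p-1) * |s - t|) := add_le_add h1 h2
      _ ≤ D ^ p * |s - t| + (p:ℝ) * D ^ p * |s - t| := by linarith [h3]
      _ = (↑(p+1) : ℝ) * D ^ (p + 1 - 1) * |s - t| := by push_cast; ring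

/-- If `f : ℝⁿ \\ {0} → ℝ` is locally Lipschitz, then
`I(s) = ∫_{∂B_s(0)} f dH^{n-1}` is locally Lipschitz on `(0, ∞)`. -/
theorem stmt_2 (n : ℕ) (hn : 2 ≤ n) (f : EuclideanSpace ℝ (Fin n) → ℝ)
    (hf : ∀ x : EuclideanSpace ℝ (Fin n), x ≠ 0 →
      ∃ ε > (0:ℝ), ∃ K : NNReal, LipschitzOnWith K f (Metric.ball x ε)) :
    ∀ c d : ℝ, 0 < c → c ≤ d →
      ∃ K : NNReal, LipschitzOnWith K
        (fun s : ℝ => ∫ y in Metric.sphere (0 : EuclideanSpace ℝ (Fin n)) s, f y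
          ∂(Measure.hausdorffMeasure ((n : ℝ) - 1)))
        (Set.Icc c d) := by
  intro c d hc hcd
  obtain ⟨m, rfl⟩ : ∃ m, n = m + 1 := ⟨n - 1, by omega⟩
  have hd0 : 0 < d := lt_of_lt_of_le hc hcd
  set dd : ℝ := ((m+1 : ℕ) : ℝ) - 1 with hdd
  have hddm : dd = (m : ℝ) := by push_cast [hdd]; ring
  have hdd0 : 0 ≤ dd := by rw [hddm]; positivity
  set ν : Measure (EuclideanSpace ℝ (Fin (m+1))) := μH[dd].restrict (Metric.sphere 0 1) with hν
  haveI hνfin : IsFiniteMeasure ν := by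
    constructor
    rw [hν, Measure.restrict_apply_univ, hddm]
    exact sphere_hausdorff_lt_top m
  set V : ℝ := (ν Set.univ).toReal with hV
  have hV0 : 0 ≤ V := ENNReal.toReal_nonneg
  -- continuity of f away from 0
  have hfc : ∀ x : EuclideanSpace ℝ (Fin (m+1)), x ≠ 0 → ContinuousAt f x := by
    intro x hx
    obtain ⟨ε, hε, K, hK⟩ := hf x hx
    exact hK.continuousOn.continuousAt (Metric.ball_mem_nhds x hε)
  -- annulus
  set A : Set (EuclideanSpace ℝ (Fin (m+1))) := Metric.closedBall 0 d \ Metric.ball 0 c with hA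
  have hAmem : ∀ x : EuclideanSpace ℝ (Fin (m+1)), x ∈ A ↔ c ≤ ‖x‖ ∧ ‖x‖ ≤ d := by
    intro x
    simp only [hA, Set.mem_diff, mem_closedBall_zero_iff, mem_ball_zero_iff, not_lt]
    tauto
  have hAcomp : IsCompact A := (isCompact_closedBall 0 d).diff Metric.isOpen_ball
  have hA0 : ∀ x ∈ A, x ≠ 0 := by
    intro x hx h0
    rw [hAmem] at hx
    rw [h0] at hx
    simp at hx
    linarith [hx.1]
  obtain ⟨K₁, hK₁⟩ := lipschitzOnWith_of_locally hAcomp (fun x hx => hf x (hA0 x hx))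
  have hcontA : ContinuousOn f A := fun x hx => (hfc x (hA0 x hx)).continuousWithinAt
  obtain ⟨M₀, hM₀⟩ := hAcomp.exists_bound_of_continuousOn hcontA
  set M : ℝ := max M₀ 0 with hM
  have hM0 : 0 ≤ M := le_max_right _ _
  have hMb : ∀ x ∈ A, ‖f x‖ ≤ M := fun x hx => le_trans (hM₀ x hx) (le_max_left _ _)
  -- scaled points lie in annulus
  have hmaps : ∀ s : ℝ, s ∈ Set.Icc c d → ∀ y : EuclideanSpace ℝ (Fin (m+1)), y ∈ Metric.sphere (0:EuclideanSpace ℝ (Fin (m+1))) 1 →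
      s • y ∈ A := by
    intro s hs y hy
    have hyn : ‖y‖ = 1 := by simpa using hy
    rw [hAmem, norm_smul, hyn, mul_one, Real.norm_eq_abs,
      abs_of_pos (lt_of_lt_of_le hc hs.1)]
    exact ⟨hs.1, hs.2⟩
  -- J
  set J : ℝ → ℝ := fun s => ∫ y, f (s • y) ∂ν with hJ
  -- integrability
  have hint : ∀ s : ℝ, s ∈ Set.Icc c d → Integrable (fun y => f (s • y)) ν := by
    intro s hs
    have hs0 : 0 < s := lt_of_lt_of_le hc hs.1
    have hcont : ContinuousOn (fun y : EuclideanSpace ℝ (Fin (m+1)) => f (s • y)) (Metric.sphere 0 1) := by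
      intro y hy
      have h1 : s • y ≠ 0 := hA0 _ (hmaps s hs y hy)
      exact ((hfc (s • y) h1).comp ((continuous_const_smul s).continuousAt)).continuousWithinAt
    refine ⟨hcont.aestronglyMeasurable (isClosed_sphere.measurableSet), ?_⟩
    apply HasFiniteIntegral.of_bounded (C := M)
    rw [hν]
    apply ae_restrict_of_forall_mem isClosed_sphere.measurableSet
    intro y hy
    exact hMb _ (hmaps s hs y hy)
  -- bound on J
  have hJb : ∀ s ∈ Set.Icc c d, |J s| ≤ M * V := by
    intro s hs
    rw [← Real.norm_eq_abs]
    apply norm_integral_le_of_norm_le_const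
    rw [hν]
    apply ae_restrict_of_forall_mem isClosed_sphere.measurableSet
    intro y hy
    exact hMb _ (hmaps s hs y hy)
  -- Lipschitz bound on J
  have hJlip : ∀ s ∈ Set.Icc c d, ∀ t ∈ Set.Icc c d,
      |J s - J t| ≤ (K₁ : ℝ) * |s - t| * V := by
    intro s hs t ht
    rw [hJ]
    simp only
    rw [← integral_sub (hint s hs) (hint t ht), ← Real.norm_eq_abs]
    apply norm_integral_le_of_norm_le_const
    rw [hν]
    apply ae_restrict_of_forall_mem isClosed_sphere.measurableSet
    intro y hy
    have hyn : ‖y‖ = 1 := by simpa using hy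
    have h1 := hK₁.dist_le_mul (s • y) (hmaps s hs y hy) (t • y) (hmaps t ht y hy)
    rw [Real.norm_eq_abs, ← Real.dist_eq]
    calc dist (f (s • y)) (f (t • y)) ≤ (K₁ : ℝ) * dist (s • y) (t • y) := h1
      _ = (K₁ : ℝ) * |s - t| := by
          rw [dist_eq_norm, ← sub_smul, norm_smul, hyn, mul_one, Real.norm_eq_abs]
  -- the rescaling identity
  have hI : ∀ s : ℝ, s ∈ Set.Icc c d →
      (∫ y in Metric.sphere (0:EuclideanSpace ℝ (Fin (m+1))) s, f y ∂μH[dd]) = s ^ m * J s := by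
    intro s hs
    have hs0 : 0 < s := lt_of_lt_of_le hc hs.1
    have hT : MeasurableEmbedding (fun y : EuclideanSpace ℝ (Fin (m+1)) => s • y) :=
      (Homeomorph.smulOfNeZero s hs0.ne').measurableEmbedding
    calc (∫ y in Metric.sphere (0:EuclideanSpace ℝ (Fin (m+1))) s, f y ∂μH[dd])
        = ∫ y, f y ∂((‖s‖₊ ^ dd : ℝ≥0) •
            Measure.map (fun y : EuclideanSpace ℝ (Fin (m+1)) => s • y) ν) := by
          rw [← restrict_sphere_scaling dd hdd0 hs0]
      _ = (‖s‖₊ ^ dd : ℝ≥0) • ∫ y, f y ∂(Measure.map (fun y : EuclideanSpace ℝ (Fin (m+1)) => s • y) ν) :=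
          integral_smul_nnreal_measure _ _
      _ = (‖s‖₊ ^ dd : ℝ≥0) • ∫ y, f (s • y) ∂ν := by rw [hT.integral_map]
      _ = s ^ m * J s := by
          rw [NNReal.smul_def, smul_eq_mul]
          congr 1
          push_cast
          rw [← Real.rpow_natCast s m, ← hddm]
          rw [Real.norm_eq_abs, abs_of_pos hs0]
  -- assemble
  refine ⟨Real.toNNReal ((m:ℝ) * d ^ (m-1) * (M * V) + d ^ m * ((K₁:ℝ) * V)), ?_⟩
  apply LipschitzOnWith.of_dist_le_mul
  intro s hs t ht
  have hIs := hI s hs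
  have hIt := hI t ht
  have hs0 : 0 < s := lt_of_lt_of_le hc hs.1
  have ht0 : 0 < t := lt_of_lt_of_le hc ht.1
  rw [Real.dist_eq, Real.dist_eq]
  simp only [hIs, hIt]
  have key : s ^ m * J s - t ^ m * J t = (s ^ m - t ^ m) * J s + t ^ m * (J s - J t) := by
    ring
  have hsm : s ∈ Set.Icc (0:ℝ) d := ⟨le_of_lt hs0, hs.2⟩
  have htm : t ∈ Set.Icc (0:ℝ) d := ⟨le_of_lt ht0, ht.2⟩
  have h1 : |(s ^ m - t ^ m) * J s| ≤ (m:ℝ) * d ^ (m-1) * (M * V) * |s - t| := by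
    rw [abs_mul]
    calc |s ^ m - t ^ m| * |J s| ≤ ((m:ℝ) * d ^ (m-1) * |s - t|) * (M * V) := by
          apply mul_le_mul (pow_lip_aux (le_of_lt hd0) m s t hsm htm) (hJb s hs)
            (abs_nonneg _)
          positivity
      _ = (m:ℝ) * d ^ (m-1) * (M * V) * |s - t| := by ring
  have h2 : |t ^ m * (J s - J t)| ≤ d ^ m * ((K₁:ℝ) * V) * |s - t| := by
    rw [abs_mul, abs_of_nonneg (pow_nonneg (le_of_lt ht0) m)]
    calc t ^ m * |J s - J t| ≤ d ^ m * ((K₁:ℝ) * |s - t| * V) := by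
          apply mul_le_mul (pow_le_pow_left₀ (le_of_lt ht0) ht.2 m) (hJlip s hs t ht)
            (abs_nonneg _)
          positivity
      _ = d ^ m * ((K₁:ℝ) * V) * |s - t| := by ring
  calc |s ^ m * J s - t ^ m * J t|
      = |(s ^ m - t ^ m) * J s + t ^ m * (J s - J t)| := by rw [key]
    _ ≤ |(s ^ m - t ^ m) * J s| + |t ^ m * (J s - J t)| := abs_add_le _ _
    _ ≤ ((m:ℝ) * d ^ (m-1) * (M * V) + d ^ m * ((K₁:ℝ) * V)) * |s - t| := by
        linarith [h1, h2]
    _ ≤ (Real.toNNReal ((m:ℝ) * d ^ (m-1) * (M * V) + d ^ m * ((K₁:ℝ) * V)) : ℝ)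
          * |s - t| := by
        apply mul_le_mul_of_nonneg_right (Real.le_coe_toNNReal _) (abs_nonneg _)
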